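/- If O_{a₁} ⊂ O_{a₂} ⊂ ⋯ ⊂ O_{a_n} is a proper chain where O_{a_i} is an orbital of a_i ∈ PLo(I), and the group generated by a₁,…,a_n has no transition chains (equivalently, intersecting element orbitals are nested), then O_{a_n} is an orbital of the product a₁a₂⋯a_n. -/

import Mathlib

/-- `f` is an orientation-preserving piecewise-linear homeomorphism of `[0,1]`
(extended by the identity outside `[0,1]`) with finitely many breakpoints. -/
def IsPLo (f : ℝ → ℝ) : Prop :=
  StrictMono f ∧ Function.Bijective f ∧ f 0 = 0 ∧ f 1 = 1 ∧
    (∀ x : ℝ, x ≤ 0 ∨ 1 ≤ x → f x = x) ∧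
    ∃ s : Finset ℝ, ∀ x ∈ Set.Ioo (0:ℝ) 1, x ∉ s →
      ∃ a b : ℝ, ∀ᶠ y in nhds x, f y = a * y + b

/-- `A` is an orbital of `f`: a maximal open interval contained in the support of `f`. -/
def IsOrbital (f : ℝ → ℝ) (A : Set ℝ) : Prop :=
  (∃ a b : ℝ, a < b ∧ A = Set.Ioo a b) ∧ A ⊆ {x | f x ≠ x} ∧
    ∀ B : Set ℝ, (∃ a b : ℝ, a < b ∧ B = Set.Ioo a b) → B ⊆ {x | f x ≠ x} → A ⊆ B → A = B

namespace Stmt12Aux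
open Set Function


lemma supp_isOpen {f : ℝ → ℝ} (hf : Continuous f) : IsOpen {x | f x ≠ x} := by
  have h : {x | f x ≠ x} = (fun x => f x - x) ⁻¹' ({0}ᶜ) := by
    ext x; simp [sub_eq_zero]
  rw [h]
  exact (isOpen_compl_singleton).preimage (hf.sub continuous_id)

lemma orbital_fixes {f : ℝ → ℝ} (hc : Continuous f) {p q : ℝ} (hpq : p < q)
    (h : IsOrbital f (Set.Ioo p q)) : f p = p ∧ f q = q := by
  have hopen := supp_isOpen hc
  constructor
  · by_contra hp
    obtain ⟨δ, hδ, hball⟩ := Metric.isOpen_iff.1 hopen p hp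
    rw [Real.ball_eq_Ioo] at hball
    have hbsub : Set.Ioo (p - δ) q ⊆ {x | f x ≠ x} := by
      intro t ht
      rcases le_or_gt t p with h1 | h1
      · exact hball ⟨ht.1, by linarith⟩
      · exact h.2.1 ⟨h1, ht.2⟩
    have heq := h.2.2 (Set.Ioo (p - δ) q) ⟨p - δ, q, by linarith, rfl⟩ hbsub
      (Set.Ioo_subset_Ioo (by linarith) le_rfl)
    have : p ∈ Set.Ioo p q := heq ▸ (⟨by linarith, hpq⟩ : p ∈ Set.Ioo (p - δ) q)
    exact lt_irrefl p this.1
  · by_contra hq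
    obtain ⟨δ, hδ, hball⟩ := Metric.isOpen_iff.1 hopen q hq
    rw [Real.ball_eq_Ioo] at hball
    have hbsub : Set.Ioo p (q + δ) ⊆ {x | f x ≠ x} := by
      intro t ht
      rcases lt_or_ge t q with h1 | h1
      · exact h.2.1 ⟨ht.1, h1⟩
      · exact hball ⟨by linarith, ht.2⟩
    have heq := h.2.2 (Set.Ioo p (q + δ)) ⟨p, q + δ, by linarith, rfl⟩ hbsub
      (Set.Ioo_subset_Ioo le_rfl (by linarith))
    have : q ∈ Set.Ioo p q := heq ▸ (⟨hpq, by linarith⟩ : q ∈ Set.Ioo p (q + δ))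
    exact lt_irrefl q this.2

lemma orbital_mem {f : ℝ → ℝ} (hm : StrictMono f) (hs : Function.Surjective f)
    (hfix : ∀ x : ℝ, x ≤ 0 ∨ 1 ≤ x → f x = x) {y : ℝ} (hy : f y ≠ y) :
    ∃ p q : ℝ, p < q ∧ IsOrbital f (Set.Ioo p q) ∧ y ∈ Set.Ioo p q := by
  have hc : Continuous f := hm.monotone.continuous_of_surjective hs
  set U := {x : ℝ | f x ≠ x} with hU
  have hUopen : IsOpen U := supp_isOpen hc
  have hUsub : U ⊆ Set.Ioo 0 1 := by
    intro x hx
    by_contra hxn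
    rw [Set.mem_Ioo, not_and_or, not_lt, not_lt] at hxn
    exact hx (hfix x hxn)
  set T := connectedComponentIn U y with hT
  have hyT : y ∈ T := mem_connectedComponentIn hy
  have hTopen : IsOpen T := hUopen.connectedComponentIn
  have hTU : T ⊆ U := connectedComponentIn_subset U y
  have hT01 : T ⊆ Set.Ioo 0 1 := hTU.trans hUsub
  have hbddA : BddAbove T := (bddAbove_Ioo (a := (0:ℝ)) (b := 1)).mono hT01
  have hbddB : BddBelow T := (bddBelow_Ioo : BddBelow (Set.Ioo (0:ℝ) 1)).mono hT01
  have hTne : T.Nonempty := ⟨y, hyT⟩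
  have hord : OrdConnected T := isPreconnected_connectedComponentIn.ordConnected
  obtain ⟨ε, hε, hball⟩ := Metric.isOpen_iff.1 hTopen y hyT
  rw [Real.ball_eq_Ioo] at hball
  set p := sInf T
  set q := sSup T
  have hp1 : p ≤ y - ε / 2 := csInf_le hbddB (hball ⟨by linarith, by linarith⟩)
  have hq1 : y + ε / 2 ≤ q := le_csSup hbddA (hball ⟨by linarith, by linarith⟩)
  have hpy : p ≤ y := csInf_le hbddB hyT
  have hyq : y ≤ q := le_csSup hbddA hyT
  have hpq : p < q := by linarith
  have hTeq : T = Set.Ioo p q := by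
    apply Set.Subset.antisymm
    · intro x hx
      have h1 : p ≤ x := csInf_le hbddB hx
      have h2 : x ≤ q := le_csSup hbddA hx
      constructor
      · rcases lt_or_eq_of_le h1 with h | h
        · exact h
        · exfalso
          obtain ⟨δ, hδ, hb⟩ := Metric.isOpen_iff.1 hTopen x hx
          rw [Real.ball_eq_Ioo] at hb
          have : x - δ / 2 ∈ T := hb ⟨by linarith, by linarith⟩
          have := csInf_le hbddB this
          rw [← h] at this; linarith
      · rcases lt_or_eq_of_le h2 with h | h
        · exact h
        · exfalso
          obtain ⟨δ, hδ, hb⟩ := Metric.isOpen_iff.1 hTopen x hx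
          rw [Real.ball_eq_Ioo] at hb
          have : x + δ / 2 ∈ T := hb ⟨by linarith, by linarith⟩
          have := le_csSup hbddA this
          rw [h] at this; linarith
    · intro x hx
      obtain ⟨t1, ht1T, ht1⟩ := exists_lt_of_csInf_lt hTne hx.1
      obtain ⟨t2, ht2T, ht2⟩ := exists_lt_of_lt_csSup hTne hx.2
      exact hord.out ht1T ht2T ⟨ht1.le, ht2.le⟩
  refine ⟨p, q, hpq, ⟨⟨p, q, hpq, rfl⟩, hTeq ▸ hTU, ?_⟩, hTeq ▸ hyT⟩
  rintro B ⟨c, d, hcd, rfl⟩ hBU hsub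
  have hyB : y ∈ Set.Ioo c d := hsub (hTeq ▸ hyT)
  have : Set.Ioo c d ⊆ T := isPreconnected_Ioo.subset_connectedComponentIn hyB hBU
  exact Set.Subset.antisymm hsub (hTeq ▸ this)

lemma orbital_eq {f : ℝ → ℝ} {A A' : Set ℝ} (hA : IsOrbital f A) (hA' : IsOrbital f A')
    (hne : (A ∩ A').Nonempty) : A = A' := by
  obtain ⟨a, b, hab, rfl⟩ := hA.1
  obtain ⟨c, d, hcd, rfl⟩ := hA'.1
  obtain ⟨z, hz1, hz2⟩ := hne
  have hu : Set.Ioo a b ∪ Set.Ioo c d = Set.Ioo (min a c) (max b d) :=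
    Set.Ioo_union_Ioo' (hz2.1.trans hz1.2) (hz1.1.trans hz2.2)
  have husub : Set.Ioo (min a c) (max b d) ⊆ {x | f x ≠ x} := by
    rw [← hu]; exact Set.union_subset hA.2.1 hA'.2.1
  have hlt : min a c < max b d := lt_of_le_of_lt (min_le_left a c) (lt_of_lt_of_le hab (le_max_left b d))
  have h1 := hA.2.2 _ ⟨_, _, hlt, rfl⟩ husub (hu ▸ Set.subset_union_left)
  have h2 := hA'.2.2 _ ⟨_, _, hlt, rfl⟩ husub (hu ▸ Set.subset_union_right)
  rw [h1, h2]


lemma mid_mem {s t α β : ℝ} (h : max s α < min t β) :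
    (max s α + min t β) / 2 ∈ Set.Ioo s t ∩ Set.Ioo α β := by
  have h1 := le_max_left s α; have h2 := le_max_right s α
  have h3 := min_le_left t β; have h4 := min_le_right t β
  refine ⟨⟨?_, ?_⟩, ?_, ?_⟩ <;> linarith

def Nice (f : Equiv.Perm ℝ) : Prop :=
  StrictMono ⇑f ∧ ∀ x : ℝ, x ≤ 0 ∨ 1 ≤ x → f x = x

lemma Nice.continuous {f : Equiv.Perm ℝ} (hf : Nice f) : Continuous ⇑f :=
  hf.1.monotone.continuous_of_surjective f.surjective

lemma nice_of_mem {s : Set (Equiv.Perm ℝ)} (hs : ∀ f ∈ s, Nice f) :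
    ∀ f ∈ Subgroup.closure s, Nice f := by
  intro f hf
  induction hf using Subgroup.closure_induction with
  | mem g hg => exact hs g hg
  | one => exact ⟨fun x y h => by simpa using h, fun x _ => rfl⟩
  | mul g h _ _ hg hh =>
    refine ⟨fun x y hxy => ?_, fun x hx => ?_⟩
    · exact hg.1 (hh.1 hxy)
    · simp only [Equiv.Perm.mul_apply, hh.2 x hx, hg.2 x hx]
  | inv g _ hg =>
    refine ⟨fun x y hxy => ?_, fun x hx => ?_⟩
    · rw [← hg.1.lt_iff_lt]
      simpa using hxy
    · have h1 : g x = x := hg.2 x hx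
      calc g⁻¹ x = g⁻¹ (g x) := by rw [h1]
        _ = x := Equiv.symm_apply_apply g x

lemma key {H : Subgroup (Equiv.Perm ℝ)} (hH : ∀ h ∈ H, Nice h)
    (hntc : ∀ f ∈ H, ∀ g ∈ H, ∀ A B : Set ℝ, IsOrbital ⇑f A → IsOrbital ⇑g B →
      (A ∩ B).Nonempty → A ⊆ B ∨ B ⊆ A)
    {f g : Equiv.Perm ℝ} (hf : f ∈ H) (hg : g ∈ H)
    {A B : Set ℝ} (hA : IsOrbital ⇑f A) (hB : IsOrbital ⇑g B) (hAB : A ⊂ B) :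
    IsOrbital ⇑(f * g) B := by
  have nf : Nice f := hH f hf
  have ng : Nice g := hH g hg
  have hwmem : f * g ∈ H := H.mul_mem hf hg
  have nw : Nice (f * g) := hH _ hwmem
  obtain ⟨α, β, hαβ, rfl⟩ := hB.1
  have hAne : A.Nonempty := by
    obtain ⟨p, q, hpq, rfl⟩ := hA.1
    exact ⟨(p + q) / 2, by simp only [Set.mem_Ioo]; constructor <;> linarith⟩
  obtain ⟨hgα, hgβ⟩ := orbital_fixes ng.continuous hαβ hB
  -- f fixes α and β
  have hfix_end : ∀ z : ℝ, α ≤ z → z ≤ β → z ∉ Set.Ioo α β → f z = z := by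
    intro z hz1 hz2 hz3
    by_contra hz
    obtain ⟨s, t, hst, horb', hzm⟩ := orbital_mem nf.1 f.surjective nf.2 hz
    have hlt : max s α < min t β :=
      max_lt (lt_min hst (lt_of_lt_of_le hzm.1 hz2)) (lt_min (lt_of_le_of_lt hz1 hzm.2) hαβ)
    have hw : (Set.Ioo s t ∩ Set.Ioo α β).Nonempty := ⟨_, mid_mem hlt⟩
    rcases hntc f hf g hg _ _ horb' hB hw with h | h
    · exact hz3 (h hzm)
    · have heq : A = Set.Ioo s t := orbital_eq hA horb'
        ⟨hAne.choose, hAne.choose_spec, h (hAB.1 hAne.choose_spec)⟩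
      exact hAB.not_subset (heq ▸ h)
  have hfα : f α = α := hfix_end α le_rfl hαβ.le (fun h => lt_irrefl α h.1)
  have hfβ : f β = β := hfix_end β hαβ.le le_rfl (fun h => lt_irrefl β h.2)
  -- support claim
  have hsupp : ∀ x ∈ Set.Ioo α β, (f * g) x ≠ x := by
    intro x hx hfgx
    rw [Equiv.Perm.mul_apply] at hfgx
    have hgx : g x ≠ x := hB.2.1 hx
    have hyB : g x ∈ Set.Ioo α β := ⟨hgα ▸ ng.1 hx.1, hgβ ▸ ng.1 hx.2⟩
    have hfyne : f (g x) ≠ g x := by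
      rw [hfgx]; exact fun h => hgx h.symm
    obtain ⟨u, v, huv, hA', hyA'⟩ := orbital_mem nf.1 f.surjective nf.2 hfyne
    obtain ⟨hfu, hfv⟩ := orbital_fixes nf.continuous huv hA'
    have hxA' : x ∈ Set.Ioo u v :=
      ⟨by rw [← hfu, ← hfgx]; exact nf.1 hyA'.1, by rw [← hfv, ← hfgx]; exact nf.1 hyA'.2⟩
    -- A' ⊆ B
    have hA'B : Set.Ioo u v ⊆ Set.Ioo α β := by
      rcases hntc f hf g hg _ _ hA' hB ⟨g x, hyA', hyB⟩ with h | h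
      · exact h
      · exfalso
        have heq : A = Set.Ioo u v := orbital_eq hA hA'
          ⟨hAne.choose, hAne.choose_spec, (hAB.1.trans h) hAne.choose_spec⟩
        exact hAB.not_subset (heq ▸ h)
    obtain ⟨hαu, hvβ⟩ := (Set.Ioo_subset_Ioo_iff huv).1 hA'B
    rcases lt_or_eq_of_le hvβ with hv | hv
    · -- right endpoint v < β
      have hvB : v ∈ Set.Ioo α β := ⟨lt_of_le_of_lt hαu huv, hv⟩
      have hwv : (f * g) v ≠ v := by
        rw [Equiv.Perm.mul_apply]
        intro h
        exact hB.2.1 hvB (f.injective (by rw [h, hfv]))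
      obtain ⟨s, t, hst, hC, hvC⟩ := orbital_mem nw.1 (f * g).surjective nw.2 hwv
      have hxs : x ≤ s := by
        by_contra hxs
        push_neg at hxs
        exact hC.2.1 ⟨hxs, hxA'.2.trans hvC.2⟩ (by rw [Equiv.Perm.mul_apply]; exact hfgx)
      have hz : ((s + v) / 2) ∈ Set.Ioo s t ∩ Set.Ioo u v := by
        refine ⟨⟨?_, ?_⟩, ?_, ?_⟩
        · linarith [hvC.1]
        · linarith [hvC.1, hvC.2]
        · have := hxA'.1; linarith [hvC.1]
        · linarith [hvC.1]
      rcases hntc _ hwmem f hf _ _ hC hA' ⟨_, hz⟩ with h | h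
      · exact lt_irrefl v (h hvC).2
      · exact absurd (h hxA').1 (not_lt.2 hxs)
    · -- v = β, so α < u
      have hαu' : α < u := by
        rcases lt_or_eq_of_le hαu with h | h
        · exact h
        · exfalso
          have heqB : A = Set.Ioo u v := orbital_eq hA hA'
            ⟨hAne.choose, hAne.choose_spec, by
              rw [← h, hv]; exact hAB.1 hAne.choose_spec⟩
          exact hAB.not_subset (by rw [heqB, ← h, hv])
      have huB : u ∈ Set.Ioo α β := ⟨hαu', lt_of_lt_of_le huv hvβ⟩
      have hwu : (f * g) u ≠ u := by
        rw [Equiv.Perm.mul_apply]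
        intro h
        exact hB.2.1 huB (f.injective (by rw [h, hfu]))
      obtain ⟨s, t, hst, hC, huC⟩ := orbital_mem nw.1 (f * g).surjective nw.2 hwu
      have hts : t ≤ x := by
        by_contra hts
        push_neg at hts
        exact hC.2.1 ⟨huC.1.trans hxA'.1, hts⟩ (by rw [Equiv.Perm.mul_apply]; exact hfgx)
      have hz : ((u + t) / 2) ∈ Set.Ioo s t ∩ Set.Ioo u v := by
        refine ⟨⟨?_, ?_⟩, ?_, ?_⟩
        · linarith [huC.1, huC.2]
        · linarith [huC.2]
        · linarith [huC.2]
        · have := hxA'.2; linarith [huC.2]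
      rcases hntc _ hwmem f hf _ _ hC hA' ⟨_, hz⟩ with h | h
      · exact lt_irrefl u (h huC).1
      · exact absurd (h hxA').2 (not_lt.2 hts)
  -- assemble
  refine ⟨⟨α, β, hαβ, rfl⟩, fun x hx => hsupp x hx, ?_⟩
  rintro B' ⟨a', b', ha'b', rfl⟩ hB'supp hsub
  obtain ⟨h1, h2⟩ := (Set.Ioo_subset_Ioo_iff hαβ).1 hsub
  have hwα : (f * g) α = α := by rw [Equiv.Perm.mul_apply, hgα, hfα]
  have hwβ : (f * g) β = β := by rw [Equiv.Perm.mul_apply, hgβ, hfβ]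
  have ha : a' = α := by
    rcases lt_or_eq_of_le h1 with h | h
    · exact absurd hwα (hB'supp ⟨h, lt_of_lt_of_le hαβ h2⟩)
    · exact h
  have hb : b' = β := by
    rcases lt_or_eq_of_le h2 with h | h
    · exact absurd hwβ (hB'supp ⟨lt_of_le_of_lt h1 hαβ, h⟩)
    · exact h.symm
  rw [ha, hb]

theorem aux (n : ℕ) : ∀ (_ : 0 < n) (a : Fin n → Equiv.Perm ℝ) (O : Fin n → Set ℝ),
    (∀ i, IsPLo ⇑(a i)) → (∀ i, IsOrbital ⇑(a i) (O i)) →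
    (∀ i j : Fin n, i < j → O i ⊂ O j) →
    (∀ f ∈ Subgroup.closure (Set.range a), ∀ g ∈ Subgroup.closure (Set.range a),
      ∀ A B : Set ℝ, IsOrbital ⇑f A → IsOrbital ⇑g B → (A ∩ B).Nonempty →
        A ⊆ B ∨ B ⊆ A) →
    ∀ (h : n - 1 < n), IsOrbital ⇑((List.ofFn a).prod) (O ⟨n - 1, h⟩) := by
  induction n with
  | zero => intro h; exact absurd h (lt_irrefl 0)
  | succ m ih =>
    intro _ a O hPL horb hchain hntc h
    rcases Nat.eq_zero_or_pos m with hm | hm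
    · subst hm
      have : (List.ofFn a).prod = a 0 := by
        simp [List.ofFn_succ]
      rw [this]
      have h0 : (⟨0, h⟩ : Fin 1) = 0 := rfl
      rw [h0]
      exact horb 0
    · -- m ≥ 1
      set a' : Fin m → Equiv.Perm ℝ := fun i => a i.succ with ha'
      set O' : Fin m → Set ℝ := fun i => O i.succ with hO'
      have hrange : Set.range a' ⊆ Set.range a := by
        rintro _ ⟨i, rfl⟩; exact ⟨i.succ, rfl⟩
      have hcl : Subgroup.closure (Set.range a') ≤ Subgroup.closure (Set.range a) :=
        Subgroup.closure_mono hrange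
      have ihres := ih hm a' O' (fun i => hPL i.succ) (fun i => horb i.succ)
        (fun i j hij => hchain i.succ j.succ (Fin.succ_lt_succ_iff.2 hij))
        (fun f hf g hg A B hA hB hne => hntc f (hcl hf) g (hcl hg) A B hA hB hne)
        (Nat.sub_lt hm one_pos)
      have hidx : O' ⟨m - 1, Nat.sub_lt hm one_pos⟩ = O ⟨m, Nat.lt_succ_self m⟩ := by
        have hs : (⟨m - 1, Nat.sub_lt hm one_pos⟩ : Fin m).succ = ⟨m, Nat.lt_succ_self m⟩ := by
          apply Fin.ext
          show m - 1 + 1 = m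
          omega
        show O (⟨m - 1, Nat.sub_lt hm one_pos⟩ : Fin m).succ = O ⟨m, Nat.lt_succ_self m⟩
        rw [hs]
      rw [hidx] at ihres
      have hnice : ∀ h ∈ Subgroup.closure (Set.range a), Nice h := by
        apply nice_of_mem
        rintro _ ⟨i, rfl⟩
        exact ⟨(hPL i).1, (hPL i).2.2.2.2.1⟩
      have hmem0 : a 0 ∈ Subgroup.closure (Set.range a) :=
        Subgroup.subset_closure ⟨0, rfl⟩
      have hmemp : (List.ofFn a').prod ∈ Subgroup.closure (Set.range a) := by
        apply Subgroup.list_prod_mem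
        intro x hx
        obtain ⟨i, rfl⟩ := List.mem_ofFn.1 hx
        exact Subgroup.subset_closure ⟨i.succ, rfl⟩
      have hchain0 : O 0 ⊂ O ⟨m, Nat.lt_succ_self m⟩ := by
        apply hchain
        exact hm
      have := key hnice hntc hmem0 hmemp (horb 0) ihres hchain0
      have hprod : (List.ofFn a).prod = a 0 * (List.ofFn a').prod := by
        rw [List.ofFn_succ, List.prod_cons]
      rw [hprod]
      exact this

end Stmt12Aux

/-- If `O₁ ⊂ O₂ ⊂ ⋯ ⊂ O_n` is a proper chain of orbitals of `a₁,…,a_n ∈ PLo(I)` and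
the group generated by the `aᵢ` has no transition chains (intersecting element
orbitals are nested), then `O_n` is an orbital of the product `a₁a₂⋯a_n`. -/
theorem stmt12 (n : ℕ) (hn : 0 < n) (a : Fin n → Equiv.Perm ℝ) (O : Fin n → Set ℝ)
    (hPL : ∀ i, IsPLo ⇑(a i))
    (horb : ∀ i, IsOrbital ⇑(a i) (O i))
    (hchain : ∀ i j : Fin n, i < j → O i ⊂ O j)
    (hntc : ∀ f ∈ Subgroup.closure (Set.range a), ∀ g ∈ Subgroup.closure (Set.range a),
      ∀ A B : Set ℝ, IsOrbital ⇑f A → IsOrbital ⇑g B → (A ∩ B).Nonempty →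
        A ⊆ B ∨ B ⊆ A) :
    IsOrbital ⇑((List.ofFn a).prod) (O ⟨n - 1, by omega⟩) := by
  exact Stmt12Aux.aux n hn a O hPL horb hchain hntc (by omega)
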